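/- arXiv:2407.11726 — 4 statements merged into one kernel-verified Lean document; each statement's English description precedes it below -/
import Mathlib

section
/- Let g_l, g_k ∈ ℂ^N be nonzero and linearly independent, and let g_i ∈ ℂ^N be nonzero. Then the generalized coherence satisfies 0 ≤ C̃(g_l, g_k, g_i) ≤ 1. -/
/-- The coherence of two vectors in ℂ^N:
`C(g, k) = |⟨g, k⟩|² / (‖g‖² ‖k‖²)`. -/
noncomputable def coh {N : ℕ} (g k : EuclideanSpace ℂ (Fin N)) : ℝ :=
  ‖(inner ℂ g k : ℂ)‖ ^ 2 / (‖g‖ ^ 2 * ‖k‖ ^ 2)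

/-- The generalized coherence of three vectors in ℂ^N:
`C̃(g_l, g_k, g_i) = ‖g_l ⟨g_i, g_k⟩ − g_k ⟨g_i, g_l⟩‖² / (‖g_l‖² ‖g_k‖² ‖g_i‖² (1 − C(g_l, g_k)))`. -/
noncomputable def gcoh {N : ℕ} (gl gk gi : EuclideanSpace ℂ (Fin N)) : ℝ :=
  ‖(inner ℂ gi gk : ℂ) • gl - (inner ℂ gi gl : ℂ) • gk‖ ^ 2 /
    (‖gl‖ ^ 2 * ‖gk‖ ^ 2 * ‖gi‖ ^ 2 * (1 - coh gl gk))

theorem generalized_coherence_mem_Icc {N : ℕ} (gl gk gi : EuclideanSpace ℂ (Fin N))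
    (hgl : gl ≠ 0) (hgk : gk ≠ 0) (hli : LinearIndependent ℂ ![gl, gk]) (hgi : gi ≠ 0) :
    0 ≤ gcoh gl gk gi ∧ gcoh gl gk gi ≤ 1 := by
  set t : ℂ := inner ℂ gl gk with ht
  set a : ℂ := inner ℂ gi gk with ha
  set b : ℂ := inner ℂ gi gl with hb
  have hL : (0:ℝ) < ‖gl‖ := norm_pos_iff.2 hgl
  have hK : (0:ℝ) < ‖gk‖ := norm_pos_iff.2 hgk
  have hI : (0:ℝ) < ‖gi‖ := norm_pos_iff.2 hgi
  have hlt : ‖t‖ < ‖gl‖ * ‖gk‖ := by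
    rcases lt_or_eq_of_le (norm_inner_le_norm (𝕜 := ℂ) gl gk) with h | h
    · exact h
    · exfalso
      obtain ⟨r, hr0, hr⟩ := (norm_inner_eq_norm_iff hgl hgk).1 h
      have h2 := (linearIndependent_fin2.mp hli).2 r⁻¹
      apply h2
      simp only [Matrix.cons_val_one, Matrix.head_cons, Matrix.cons_val_zero]
      rw [hr, smul_smul, inv_mul_cancel₀ hr0, one_smul]
  have hG : (0:ℝ) < ‖gl‖^2 * ‖gk‖^2 - ‖t‖^2 := by nlinarith [norm_nonneg t]
  set G : ℝ := ‖gl‖^2 * ‖gk‖^2 - ‖t‖^2 with hGdef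
  set v : EuclideanSpace ℂ (Fin N) := a • gl - b • gk with hv
  -- auxiliary complex abbreviations
  set L : ℂ := (‖gl‖:ℂ)^2 with hLc
  set K : ℂ := (‖gk‖:ℂ)^2 with hKc
  have hGc : ((G:ℝ):ℂ) = L * K - t * (starRingEnd ℂ) t := by
    rw [hGdef]
    push_cast
    rw [Complex.mul_conj']
  -- the residual vector
  set r' : EuclideanSpace ℂ (Fin N) :=
    ((G:ℝ):ℂ) • gi - ((starRingEnd ℂ) b * K - (starRingEnd ℂ) a * t) • gl
      - ((starRingEnd ℂ) a * L - (starRingEnd ℂ) t * (starRingEnd ℂ) b) • gk with hr'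
  -- basic inner ℂ product facts
  have e_ll : (inner ℂ gl gl : ℂ) = L := inner_self_eq_norm_sq_to_K gl
  have e_kk : (inner ℂ gk gk : ℂ) = K := inner_self_eq_norm_sq_to_K gk
  have e_ii : (inner ℂ gi gi : ℂ) = (‖gi‖:ℂ)^2 := inner_self_eq_norm_sq_to_K gi
  have e_kl : (inner ℂ gk gl : ℂ) = (starRingEnd ℂ) t := by rw [ht, inner_conj_symm]
  have e_li : (inner ℂ gl gi : ℂ) = (starRingEnd ℂ) b := by rw [hb, inner_conj_symm]
  have e_ki : (inner ℂ gk gi : ℂ) = (starRingEnd ℂ) a := by rw [ha, inner_conj_symm]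
  -- expansion of ‖v‖²
  have ev : ((‖v‖^2 : ℝ):ℂ) =
      a * (starRingEnd ℂ) a * L - a * (starRingEnd ℂ) b * (starRingEnd ℂ) t
        - (starRingEnd ℂ) a * b * t + b * (starRingEnd ℂ) b * K := by
    have h0 : (inner ℂ v v : ℂ) = ((‖v‖:ℝ):ℂ)^2 := inner_self_eq_norm_sq_to_K v
    have h1 : ((‖v‖^2 : ℝ):ℂ) = (inner ℂ v v : ℂ) := by rw [h0]; push_cast; ring
    rw [h1, hv]
    simp only [inner_sub_left, inner_sub_right, inner_smul_left, inner_smul_right,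
      e_ll, e_kk, e_kl, ← ht, ← ha, ← hb]
    ring
  -- expansion of ‖r'‖²
  have er : ((‖r'‖^2 : ℝ):ℂ) = ((G:ℝ):ℂ) * (((G:ℝ):ℂ) * (‖gi‖:ℂ)^2 - ((‖v‖^2 : ℝ):ℂ)) := by
    have h0 : (inner ℂ r' r' : ℂ) = ((‖r'‖:ℝ):ℂ)^2 := inner_self_eq_norm_sq_to_K r'
    have h1 : ((‖r'‖^2 : ℝ):ℂ) = (inner ℂ r' r' : ℂ) := by rw [h0]; push_cast; ring
    rw [h1, ev, hGc, hr']
    simp only [inner_sub_left, inner_sub_right, inner_smul_left, inner_smul_right,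
      e_ll, e_kk, e_kl, e_li, e_ki, e_ii, ← ht, ← ha, ← hb,
      map_sub, map_mul, Complex.conj_conj, map_pow, Complex.conj_ofReal]
    rw [hGc, hLc, hKc]
    ring
  -- the key inequality
  have hkey : ‖v‖^2 ≤ ‖gi‖^2 * G := by
    have hre : ‖r'‖^2 = G * (G * ‖gi‖^2 - ‖v‖^2) := by
      have := er
      rw [hGc] at this
      have h2 : ((‖r'‖^2 : ℝ):ℂ) = (((G * (G * ‖gi‖^2 - ‖v‖^2)):ℝ):ℂ) := by
        rw [this, ← hGc]; push_cast; ring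
      exact_mod_cast h2
    nlinarith [sq_nonneg ‖r'‖, hG]
  -- denominator rewriting
  have hden : ‖gl‖^2 * ‖gk‖^2 * ‖gi‖^2 * (1 - coh gl gk) = ‖gi‖^2 * G := by
    unfold coh
    rw [← ht, hGdef]
    field_simp
  have hdpos : (0:ℝ) < ‖gi‖^2 * G := by positivity
  constructor
  · unfold gcoh
    rw [← ha, ← hb, ← hv, hden]
    positivity
  · unfold gcoh
    rw [← ha, ← hb, ← hv, hden, div_le_one hdpos]
    exact hkey
end

section
/- Let g_1, g_2 ∈ ℂ^N be nonzero and linearly independent, let g_3 ∈ ℂ^N be nonzero, and let P_2 be the orthogonal projection of ℂ^N onto the two-dimensional subspace spanned by g_1 and g_2. Then ⟨g_3, (I − P_2) g_3⟩ = ‖g_3‖² (1 − C̃(g_1, g_2, g_3)). In particular, the non-centrality parameter μ_3 = (4 / (σ² ⟨g_3,(I−P_2)g_3⟩)) · |⟨g_3, (I − P_2) g_3⟩ α_3|² of the third target equals (4 ‖g_3‖² (1 − C̃(g_1, g_2, g_3)) / σ²) · |α_3|² for any α_3 ∈ ℂ and σ > 0, provided C̃(g_1, g_2, g_3) ≠ 1.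 -/
open scoped ComplexConjugate

private lemma mul_conj_eq (z : ℂ) : z * conj z = ((‖z‖^2 : ℝ) : ℂ) := by
  simp [Complex.mul_conj, Complex.normSq_eq_norm_sq]

theorem quadform_two_dim_projection_and_noncentrality {N : ℕ}
    (g₁ g₂ g₃ : EuclideanSpace ℂ (Fin N))
    (h₁ : g₁ ≠ 0) (h₂ : g₂ ≠ 0) (hli : LinearIndependent ℂ ![g₁, g₂]) (h₃ : g₃ ≠ 0) :
    let r : EuclideanSpace ℂ (Fin N) :=
      g₃ - (Submodule.orthogonalProjectionOnto (Submodule.span ℂ ({g₁, g₂} : Set (EuclideanSpace ℂ (Fin N)))) g₃ :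
        EuclideanSpace ℂ (Fin N))
    (inner ℂ g₃ r : ℂ) = ((‖g₃‖ ^ 2 * (1 - gcoh g₁ g₂ g₃) : ℝ) : ℂ) ∧
    (gcoh g₁ g₂ g₃ ≠ 1 → ∀ (α₃ : ℂ) (σ : ℝ), 0 < σ →
      (4 / ((σ : ℂ) ^ 2 * (inner ℂ g₃ r : ℂ))) * (((‖(inner ℂ g₃ r : ℂ) * α₃‖ ^ 2 : ℝ)) : ℂ)
        = ((4 * ‖g₃‖ ^ 2 * (1 - gcoh g₁ g₂ g₃) / σ ^ 2 * ‖α₃‖ ^ 2 : ℝ) : ℂ)) := by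
  intro r
  set K := Submodule.span ℂ ({g₁, g₂} : Set (EuclideanSpace ℂ (Fin N))) with hK
  set A : ℝ := ‖g₁‖ ^ 2 with hA
  set B : ℝ := ‖g₂‖ ^ 2 with hB
  set T : ℝ := ‖g₃‖ ^ 2 with hT
  have hA0 : 0 < A := by rw [hA]; exact pow_pos (norm_pos_iff.2 h₁) 2
  have hB0 : 0 < B := by rw [hB]; exact pow_pos (norm_pos_iff.2 h₂) 2
  have hT0 : 0 < T := by rw [hT]; exact pow_pos (norm_pos_iff.2 h₃) 2
  set s : ℂ := inner ℂ g₁ g₂ with hs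
  set a : ℂ := inner ℂ g₁ g₃ with ha
  set b : ℂ := inner ℂ g₂ g₃ with hb
  -- strict Cauchy-Schwarz
  have hstrict : ‖s‖ ^ 2 < A * B := by
    have hle : ‖s‖ ≤ ‖g₁‖ * ‖g₂‖ := norm_inner_le_norm g₁ g₂
    have hne : ‖s‖ ≠ ‖g₁‖ * ‖g₂‖ := by
      intro h
      obtain ⟨c, hc0, hc⟩ := (norm_inner_eq_norm_iff h₁ h₂).1 h
      have := LinearIndependent.pair_iff.1 hli c (-1) (by rw [hc]; simp)
      simpa using this.2
    have hlt : ‖s‖ < ‖g₁‖ * ‖g₂‖ := lt_of_le_of_ne hle hne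
    calc ‖s‖ ^ 2 < (‖g₁‖ * ‖g₂‖) ^ 2 := by
          apply pow_lt_pow_left₀ hlt (norm_nonneg _)
          norm_num
      _ = A * B := by rw [hA, hB]; ring
  set D : ℝ := A * B - ‖s‖ ^ 2 with hD
  have hD0 : 0 < D := by simpa [hD] using sub_pos.2 hstrict
  -- projection decomposition
  have hmem : ((K.orthogonalProjectionOnto g₃ : K) : EuclideanSpace ℂ (Fin N)) ∈ K :=
    (K.orthogonalProjectionOnto g₃).2
  obtain ⟨x, y, hxy⟩ := Submodule.mem_span_pair.1 hmem
  have hg₁K : g₁ ∈ K := Submodule.subset_span (by simp)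
  have hg₂K : g₂ ∈ K := Submodule.subset_span (by simp)
  have hrK : r ∈ Kᗮ := Submodule.sub_starProjection_mem_orthogonal (K := K) g₃
  have hr1 : (inner ℂ g₁ r : ℂ) = 0 := (Submodule.mem_orthogonal K r).1 hrK g₁ hg₁K
  have hr2 : (inner ℂ g₂ r : ℂ) = 0 := (Submodule.mem_orthogonal K r).1 hrK g₂ hg₂K
  have hrdef : r = g₃ - (x • g₁ + y • g₂) := by rw [hxy]
  -- basic inner ℂ products
  have eA1 : (inner ℂ g₁ g₁ : ℂ) = (A : ℂ) := by rw [inner_self_eq_norm_sq_to_K]; norm_cast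
  have eB1 : (inner ℂ g₂ g₂ : ℂ) = (B : ℂ) := by rw [inner_self_eq_norm_sq_to_K]; norm_cast
  have eT1 : (inner ℂ g₃ g₃ : ℂ) = (T : ℂ) := by rw [inner_self_eq_norm_sq_to_K]; norm_cast
  have hcs : (inner ℂ g₂ g₁ : ℂ) = conj s := by rw [hs, inner_conj_symm]
  have hca : (inner ℂ g₃ g₁ : ℂ) = conj a := by rw [ha, inner_conj_symm]
  have hcb : (inner ℂ g₃ g₂ : ℂ) = conj b := by rw [hb, inner_conj_symm]
  have hdecomp : g₃ = x • g₁ + y • g₂ + r := by rw [hrdef]; abel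
  -- the linear system satisfied by x, y
  have ea : a = x * (A : ℂ) + y * s := by
    rw [ha]
    conv_lhs => rw [hdecomp]
    rw [inner_add_right, inner_add_right, inner_smul_right, inner_smul_right, eA1, hr1, ← hs]
    ring
  have eb : b = x * conj s + y * (B : ℂ) := by
    rw [hb]
    conv_lhs => rw [hdecomp]
    rw [inner_add_right, inner_add_right, inner_smul_right, inner_smul_right, eB1, hr2, hcs]
    ring
  -- inner ℂ g₃ r in terms of x, y
  have er : (inner ℂ g₃ r : ℂ) = (T : ℂ) - (x * conj a + y * conj b) := by
    rw [hrdef, inner_sub_right, inner_add_right, inner_smul_right, inner_smul_right,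
      eT1, hca, hcb]
  -- the numerator of gcoh
  set w : EuclideanSpace ℂ (Fin N) := (inner ℂ g₃ g₂ : ℂ) • g₁ - (inner ℂ g₃ g₁ : ℂ) • g₂ with hw
  have enum : ((‖w‖ ^ 2 : ℝ) : ℂ)
      = b * conj b * (A:ℂ) + a * conj a * (B:ℂ) - b * conj a * s - a * conj b * conj s := by
    have hofw : ((‖w‖ ^ 2 : ℝ) : ℂ) = (inner ℂ w w : ℂ) := by
      rw [inner_self_eq_norm_sq_to_K]; norm_cast
    rw [hofw, hw]
    simp only [inner_sub_left, inner_sub_right, inner_smul_left, inner_smul_right,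
      eA1, eB1, hcs, hca, hcb, ← hs]
    simp only [map_mul, Complex.conj_conj]
    ring
  have hDcast : ((D : ℝ) : ℂ) = (A:ℂ) * (B:ℂ) - s * conj s := by
    rw [mul_conj_eq]; push_cast [hD]; ring
  have hDne : ((D : ℝ) : ℂ) ≠ 0 := by
    simp only [ne_eq, Complex.ofReal_eq_zero]; exact ne_of_gt hD0
  -- the key algebraic identity
  have key : (x * conj a + y * conj b) * ((D:ℝ) : ℂ) = ((‖w‖ ^ 2 : ℝ) : ℂ) := by
    rw [enum, hDcast, ea, eb]
    simp only [map_add, map_mul, Complex.conj_conj, Complex.conj_ofReal]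
    ring
  -- gcoh in closed form
  have hgcoh : gcoh g₁ g₂ g₃ = ‖w‖ ^ 2 / (T * D) := by
    have h0 : gcoh g₁ g₂ g₃ = ‖w‖ ^ 2 / (A * B * T * (1 - ‖s‖ ^ 2 / (A * B))) := rfl
    rw [h0, hD]
    congr 1
    field_simp
  -- part 1
  have part1 : (inner ℂ g₃ r : ℂ) = ((T * (1 - gcoh g₁ g₂ g₃) : ℝ) : ℂ) := by
    have hsolve : x * conj a + y * conj b = ((‖w‖ ^ 2 : ℝ) : ℂ) / ((D:ℝ) : ℂ) := by
      rw [eq_div_iff hDne]; exact key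
    have hreal : T * (1 - ‖w‖ ^ 2 / (T * D)) = T - ‖w‖ ^ 2 / D := by
      field_simp
    rw [er, hsolve, hgcoh, hreal]
    push_cast
    ring
  refine ⟨part1, ?_⟩
  intro hne α σ hσ
  set G : ℝ := T * (1 - gcoh g₁ g₂ g₃) with hG
  have hGne : G ≠ 0 := by
    rw [hG]
    exact mul_ne_zero (ne_of_gt hT0) (sub_ne_zero.2 (fun h => hne h.symm))
  have hσC : ((σ : ℝ) : ℂ) ≠ 0 := by
    simp only [ne_eq, Complex.ofReal_eq_zero]; exact ne_of_gt hσ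
  have hGC : ((G : ℝ) : ℂ) ≠ 0 := by
    simp only [ne_eq, Complex.ofReal_eq_zero]; exact hGne
  rw [part1]
  have h2 : (‖((G:ℝ) : ℂ) * α‖ ^ 2 : ℝ) = G ^ 2 * ‖α‖ ^ 2 := by
    rw [norm_mul, mul_pow, Complex.norm_real, Real.norm_eq_abs, sq_abs]
  rw [h2, show (4 * T * (1 - gcoh g₁ g₂ g₃) / σ ^ 2 * ‖α‖ ^ 2 : ℝ)
      = 4 * G / σ ^ 2 * ‖α‖ ^ 2 by rw [hG]; ring]
  push_cast
  field_simp
end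

section
/- Let g_1, g_2 ∈ ℂ^N be nonzero and linearly independent, let g_3 ∈ ℂ^N, let α_2, α_3 ∈ ℂ, let σ > 0, and let P_1 be the orthogonal projection of ℂ^N onto span{g_1}. Then the non-centrality parameter of the second target, μ_2 := (4 / (σ² ⟨g_2, (I−P_1) g_2⟩)) · |⟨g_2, (I − P_1)(α_2 g_2 + α_3 g_3)⟩|², equals (4 ‖g_2‖² (1 − C(g_1, g_2)) / σ²) · |α_2 + α_3 (‖g_1‖² ⟨g_2, g_3⟩ − ⟨g_2, g_1⟩ ⟨g_1, g_3⟩) / (‖g_1‖² ‖g_2‖² (1 − C(g_1, g_2)))|². -/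
/-- The orthogonal projection onto span{g₁}. -/
noncomputable def proj1 {N : ℕ} (g₁ x : EuclideanSpace ℂ (Fin N)) : EuclideanSpace ℂ (Fin N) :=
  ((inner ℂ g₁ x : ℂ) / (‖g₁‖ ^ 2 : ℂ)) • g₁

lemma cns (z : ℂ) : ((‖z‖ : ℝ) : ℂ) ^ 2 = z * (starRingEnd ℂ) z := by
  rw [Complex.mul_conj, Complex.normSq_eq_norm_sq]
  push_cast
  ring

set_option maxHeartbeats 2000000 in
theorem noncentrality_second_target {N : ℕ} (g₁ g₂ g₃ : EuclideanSpace ℂ (Fin N))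
    (h₁ : g₁ ≠ 0) (h₂ : g₂ ≠ 0) (hli : LinearIndependent ℂ ![g₁, g₂])
    (α₂ α₃ : ℂ) (σ : ℝ) (hσ : 0 < σ) :
    let s : EuclideanSpace ℂ (Fin N) := α₂ • g₂ + α₃ • g₃
    (4 / ((σ : ℂ) ^ 2 * (inner ℂ g₂ (g₂ - proj1 g₁ g₂) : ℂ)))
        * ((‖(inner ℂ g₂ (s - proj1 g₁ s) : ℂ)‖ ^ 2 : ℝ) : ℂ)
      = ((4 * ‖g₂‖ ^ 2 * (1 - coh g₁ g₂) / σ ^ 2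
          * ‖α₂ + α₃ * ((((‖g₁‖ ^ 2 : ℝ) : ℂ) * (inner ℂ g₂ g₃ : ℂ)
              - (inner ℂ g₂ g₁ : ℂ) * (inner ℂ g₁ g₃ : ℂ))
            / ((‖g₁‖ ^ 2 * ‖g₂‖ ^ 2 * (1 - coh g₁ g₂) : ℝ) : ℂ))‖ ^ 2 : ℝ) : ℂ) := by
  intro s
  have ha : (0:ℝ) < ‖g₁‖ ^ 2 := by
    have := norm_pos_iff.2 h₁; positivity
  have hb : (0:ℝ) < ‖g₂‖ ^ 2 := by
    have := norm_pos_iff.2 h₂; positivity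
  have hcs : ‖(inner ℂ g₁ g₂ : ℂ)‖ ^ 2 < ‖g₁‖ ^ 2 * ‖g₂‖ ^ 2 := by
    have hle := norm_inner_le_norm (𝕜 := ℂ) g₁ g₂
    have hne : ‖(inner ℂ g₁ g₂ : ℂ)‖ ≠ ‖g₁‖ * ‖g₂‖ := by
      intro h
      obtain ⟨r, hr, rfl⟩ := (norm_inner_eq_norm_iff h₁ h₂).1 h
      have := LinearIndependent.pair_iff.1 hli r (-1) (by simp)
      simp at this
    calc ‖(inner ℂ g₁ g₂ : ℂ)‖ ^ 2 < (‖g₁‖ * ‖g₂‖) ^ 2 := by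
          apply pow_lt_pow_left₀ (lt_of_le_of_ne hle hne) (norm_nonneg _)
          norm_num
      _ = _ := by ring
  have hCpos : (0:ℝ) < 1 - coh g₁ g₂ := by
    rw [coh, sub_pos, div_lt_one (by positivity)]
    exact hcs
  have haC : ((‖g₁‖ : ℝ) : ℂ) ^ 2 ≠ 0 := by
    simpa using (show ((‖g₁‖ ^ 2 : ℝ) : ℂ) ≠ 0 by exact_mod_cast ha.ne')
  have hbC : ((‖g₂‖ : ℝ) : ℂ) ^ 2 ≠ 0 := by
    simpa using (show ((‖g₂‖ ^ 2 : ℝ) : ℂ) ≠ 0 by exact_mod_cast hb.ne')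
  have hA1 : ((‖g₁‖ : ℝ) : ℂ) ≠ 0 := by
    intro h0; rw [h0] at haC; simp at haC
  have hB1 : ((‖g₂‖ : ℝ) : ℂ) ≠ 0 := by
    intro h0; rw [h0] at hbC; simp at hbC
  have hσC : ((σ : ℂ)) ≠ 0 := by exact_mod_cast hσ.ne'
  have hCC : ((1 - coh g₁ g₂ : ℝ) : ℂ) ≠ 0 := by exact_mod_cast hCpos.ne'
  have hcoh : ((coh g₁ g₂ : ℝ) : ℂ)
      = (inner ℂ g₁ g₂ : ℂ) * (starRingEnd ℂ) (inner ℂ g₁ g₂ : ℂ)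
        / (((‖g₁‖ : ℝ) : ℂ) ^ 2 * ((‖g₂‖ : ℝ) : ℂ) ^ 2) := by
    rw [coh]
    push_cast
    rw [cns]
  have hK : ((‖g₂‖ : ℝ) : ℂ) ^ 2
      - (inner ℂ g₁ g₂ : ℂ) * (starRingEnd ℂ) (inner ℂ g₁ g₂ : ℂ) / ((‖g₁‖ : ℝ) : ℂ) ^ 2 ≠ 0 := by
    rw [← cns]
    intro h
    have h' : ((‖g₂‖ ^ 2 * ‖g₁‖ ^ 2 - ‖(inner ℂ g₁ g₂ : ℂ)‖ ^ 2 : ℝ) : ℂ) = 0 := by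
      push_cast
      field_simp at h
      linear_combination h
    have h2 : (‖g₂‖ ^ 2 * ‖g₁‖ ^ 2 - ‖(inner ℂ g₁ g₂ : ℂ)‖ ^ 2 : ℝ) = 0 := by exact_mod_cast h'
    nlinarith
  have hself : (inner ℂ g₂ g₂ : ℂ) = ((‖g₂‖ : ℝ) : ℂ) ^ 2 := by
    rw [inner_self_eq_norm_sq_to_K]; norm_num
  simp only [s, proj1, inner_sub_right, inner_add_right, inner_smul_right, hself]
  push_cast
  rw [hcoh]
  simp only [cns]
  simp only [map_add, map_sub, map_mul, map_div₀, map_pow, Complex.conj_ofReal,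
    inner_conj_symm, Complex.conj_conj]
  rw [show (inner ℂ g₂ g₁ : ℂ) = (starRingEnd ℂ) (inner ℂ g₁ g₂ : ℂ) from (inner_conj_symm g₂ g₁).symm]
  simp only [map_one, Complex.conj_ofReal]
  set u := (inner ℂ g₁ g₂ : ℂ) with hu
  set u' := (starRingEnd ℂ) u with hu'
  set v := (inner ℂ g₂ g₃ : ℂ) with hv
  set v' := (inner ℂ g₃ g₂ : ℂ) with hv'
  set w := (inner ℂ g₁ g₃ : ℂ) with hw
  set w' := (inner ℂ g₃ g₁ : ℂ) with hw'
  set A := ((‖g₁‖ : ℝ) : ℂ) with hA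
  set B := ((‖g₂‖ : ℝ) : ℂ) with hB
  clear_value u u' v v' w w' A B
  have hK2 : A ^ 2 * B ^ 2 - u * u' ≠ 0 := by
    intro h
    apply hK
    field_simp
    ring
    linear_combination h
  have e1 : B ^ 2 - u / A ^ 2 * u' = (A ^ 2 * B ^ 2 - u * u') / A ^ 2 := by
    field_simp
  have e2 : 1 - u * u' / (A ^ 2 * B ^ 2) = (A ^ 2 * B ^ 2 - u * u') / (A ^ 2 * B ^ 2) := by
    rw [eq_div_iff (mul_ne_zero haC hbC)]
    field_simp
    try ring
  have e3 : 1 - u' * u / (A ^ 2 * B ^ 2) = (A ^ 2 * B ^ 2 - u * u') / (A ^ 2 * B ^ 2) := by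
    rw [eq_div_iff (mul_ne_zero haC hbC)]
    field_simp
    try ring
  rw [e1, e2, e3]
  set T := A ^ 2 * B ^ 2 - u * u' with hT
  field_simp
  ring
end

section
/- Let ζ > 0, v > 0, and let Z₁, Z₂ be independent real random variables, each Gaussian with mean 0 and variance ζ + v/2. Then for every p_fa ∈ (0, 1), setting γ_th = −2 log(p_fa), one has P(2(Z₁² + Z₂²)/v ≥ γ_th) = exp(log(p_fa) / (2ζ/v + 1)). (This is the marginal detection probability of Corollary 1: the detection statistic γ_l = 2|α̂_l|²/Var[α̂_l] with α̂_l the sum of a circularly-symmetric complex Gaussian signal term of per-component variance ζ and an independent circularly-symmetric complex Gaussian noise term of per-component variance v/2 has exceedance probability p_d,l = exp(log(p_fa)/(A_l ζ_l + 1)) at threshold γ_th = −2 log(p_fa).) -/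
open MeasureTheory ProbabilityTheory

namespace DetectionAux
open Real Set Filter
open scoped ENNReal NNReal

-- radial integral
lemma radial_int (s : ℝ) (hs : 0 < s) (a : ℝ) :
    ∫ r in Ioi a, r * Real.exp (-r ^ 2 / (2 * s)) = s * Real.exp (-a ^ 2 / (2 * s)) := by
  have hderiv : ∀ x ∈ Ici a, HasDerivAt (fun r : ℝ => -s * Real.exp (-r ^ 2 / (2 * s)))
      (x * Real.exp (-x ^ 2 / (2 * s))) x := by
    intro x _
    have h1 : HasDerivAt (fun r : ℝ => -r ^ 2 / (2 * s)) (-x / s) x := by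
      have : HasDerivAt (fun r : ℝ => -r ^ 2 / (2 * s)) (-(2 * x) / (2 * s)) x := by
        have := ((hasDerivAt_pow 2 x).neg).div_const (2 * s)
        simpa using this
      convert this using 1
      field_simp
    have h2 := (h1.exp).const_mul (-s)
    refine h2.congr_deriv ?_
    have hx : -s * (-x / s) = x := by
      have hs0 : s ≠ 0 := hs.ne'
      field_simp
    rw [mul_comm _ (-x / s), ← mul_assoc, hx]
  have hint : IntegrableOn (fun r : ℝ => r * Real.exp (-r ^ 2 / (2 * s))) (Ioi a) := by
    have hb : (0:ℝ) < 1 / (2 * s) := by positivity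
    have := (integrable_mul_exp_neg_mul_sq hb).integrableOn (s := Ioi a)
    refine this.congr_fun (fun x _ => ?_) measurableSet_Ioi
    congr 1
    field_simp
  have htend : Tendsto (fun r : ℝ => -s * Real.exp (-r ^ 2 / (2 * s))) atTop (nhds 0) := by
    have h1 : Tendsto (fun r : ℝ => -r ^ 2 / (2 * s)) atTop atBot := by
      apply Tendsto.atBot_div_const (by positivity)
      exact tendsto_neg_atBot_iff.mpr (tendsto_pow_atTop (by norm_num))
    have := (Real.tendsto_exp_atBot.comp h1).const_mul (-s)
    simpa using this
  have := integral_Ioi_of_hasDerivAt_of_tendsto' hderiv hint htend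
  rw [this]
  ring

-- product of withDensity
lemma prodD (f g : ℝ → ℝ≥0∞) (hf : Measurable f) (hg : Measurable g)
    [SigmaFinite (volume.withDensity f)] [SigmaFinite (volume.withDensity g)] :
    (volume.withDensity f).prod (volume.withDensity g)
      = ((volume : Measure ℝ).prod volume).withDensity (fun p => f p.1 * g p.2) := by
  refine (Measure.prod_eq fun u t hu ht => ?_)
  rw [withDensity_apply _ (hu.prod ht), ← Measure.prod_restrict,
    lintegral_prod_mul hf.aemeasurable hg.aemeasurable,
    withDensity_apply _ hu, withDensity_apply _ ht]

lemma key (s c : ℝ) (hs : 0 < s) (hc : 0 < c) :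
    ((gaussianReal 0 s.toNNReal).prod (gaussianReal 0 s.toNNReal))
        {p : ℝ × ℝ | c ≤ p.1 ^ 2 + p.2 ^ 2}
      = ENNReal.ofReal (Real.exp (-c / (2 * s))) := by
  have hν : s.toNNReal ≠ 0 := by
    simp [Real.toNNReal_eq_zero, not_le, hs]
  have hcoe : ((s.toNNReal : ℝ≥0) : ℝ) = s := Real.coe_toNNReal _ hs.le
  set S : Set (ℝ × ℝ) := {p : ℝ × ℝ | c ≤ p.1 ^ 2 + p.2 ^ 2} with hSdef
  have hS : MeasurableSet S := by
    apply measurableSet_le measurable_const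
    fun_prop
  haveI : IsProbabilityMeasure (volume.withDensity (gaussianPDF 0 s.toNNReal)) := by
    rw [← gaussianReal_of_var_ne_zero _ hν]; infer_instance
  set h : ℝ × ℝ → ℝ := fun p =>
    gaussianPDFReal 0 s.toNNReal p.1 * gaussianPDFReal 0 s.toNNReal p.2 with hhdef
  have hnn : ∀ p, 0 ≤ h p := fun p =>
    mul_nonneg (gaussianPDFReal_nonneg _ _ _) (gaussianPDFReal_nonneg _ _ _)
  have hinth : Integrable h ((volume : Measure ℝ).prod volume) :=
    (integrable_gaussianPDFReal 0 s.toNNReal).mul_prod (integrable_gaussianPDFReal 0 s.toNNReal)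
  rw [gaussianReal_of_var_ne_zero _ hν,
    prodD _ _ (measurable_gaussianPDF _ _) (measurable_gaussianPDF _ _),
    withDensity_apply _ hS]
  have step1 : ∫⁻ p in S, gaussianPDF 0 s.toNNReal p.1 * gaussianPDF 0 s.toNNReal p.2
        ∂((volume : Measure ℝ).prod volume)
      = ENNReal.ofReal (∫ p in S, h p ∂((volume : Measure ℝ).prod volume)) := by
    calc ∫⁻ p in S, gaussianPDF 0 s.toNNReal p.1 * gaussianPDF 0 s.toNNReal p.2
          ∂((volume : Measure ℝ).prod volume)
        = ∫⁻ p in S, ENNReal.ofReal (h p) ∂((volume : Measure ℝ).prod volume) := by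
          apply lintegral_congr
          intro p
          simp [hhdef, gaussianPDF, ENNReal.ofReal_mul (gaussianPDFReal_nonneg 0 s.toNNReal p.1)]
      _ = ENNReal.ofReal (∫ p in S, h p ∂((volume : Measure ℝ).prod volume)) :=
          (ofReal_integral_eq_lintegral_ofReal hinth.restrict
            (Filter.Eventually.of_forall fun p => hnn p)).symm
  rw [step1]
  congr 1
  have hsqrtpos : 0 < Real.sqrt c := Real.sqrt_pos.mpr hc
  set G : ℝ → ℝ := fun r => (2 * π * s)⁻¹ * (r * Real.exp (-r ^ 2 / (2 * s))) with hG
  have hptw : ∀ p ∈ polarCoord.target,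
      p.1 • (S.indicator h (polarCoord.symm p))
        = (Ici (Real.sqrt c)).indicator G p.1 * (fun _ : ℝ => (1 : ℝ)) p.2 := by
    intro p hp
    rw [polarCoord_target] at hp
    have hp1 : 0 < p.1 := hp.1
    have hsq : (p.1 * Real.cos p.2) ^ 2 + (p.1 * Real.sin p.2) ^ 2 = p.1 ^ 2 := by
      linear_combination p.1 ^ 2 * Real.sin_sq_add_cos_sq p.2
    have hmem : polarCoord.symm p ∈ S ↔ Real.sqrt c ≤ p.1 := by
      simp only [hSdef, polarCoord_symm_apply, Set.mem_setOf_eq, hsq]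
      constructor
      · intro H
        exact (Real.sqrt_le_sqrt H).trans_eq (Real.sqrt_sq hp1.le)
      · intro H
        nlinarith [Real.sq_sqrt hc.le, Real.sqrt_nonneg c]
    by_cases hm : polarCoord.symm p ∈ S
    · rw [Set.indicator_of_mem hm, Set.indicator_of_mem (show p.1 ∈ Ici (Real.sqrt c) from hmem.mp hm)]
      have e1 : (√(2 * π * s))⁻¹ * (√(2 * π * s))⁻¹ = (2 * π * s)⁻¹ := by
        rw [← mul_inv, Real.mul_self_sqrt (by positivity)]
      have e2 : Real.exp (-(p.1 * Real.cos p.2) ^ 2 / (2 * s))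
            * Real.exp (-(p.1 * Real.sin p.2) ^ 2 / (2 * s))
          = Real.exp (-p.1 ^ 2 / (2 * s)) := by
        rw [← Real.exp_add, ← add_div, ← neg_add, hsq]
      simp only [hhdef, hG, gaussianPDFReal, hcoe, sub_zero, polarCoord_symm_apply,
        smul_eq_mul]
      calc p.1 * ((√(2 * π * s))⁻¹ * Real.exp (-(p.1 * Real.cos p.2) ^ 2 / (2 * s))
            * ((√(2 * π * s))⁻¹ * Real.exp (-(p.1 * Real.sin p.2) ^ 2 / (2 * s))))
          = ((√(2 * π * s))⁻¹ * (√(2 * π * s))⁻¹)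
              * (p.1 * (Real.exp (-(p.1 * Real.cos p.2) ^ 2 / (2 * s))
                * Real.exp (-(p.1 * Real.sin p.2) ^ 2 / (2 * s)))) := by ring
        _ = (2 * π * s)⁻¹ * (p.1 * Real.exp (-p.1 ^ 2 / (2 * s))) * 1 := by
            rw [e1, e2]; ring
    · have hnm : p.1 ∉ Ici (Real.sqrt c) := fun H => hm (hmem.mpr H)
      rw [Set.indicator_of_notMem hm, Set.indicator_of_notMem hnm]
      simp
  calc ∫ p in S, h p ∂((volume : Measure ℝ).prod volume)
      = ∫ p, S.indicator h p ∂((volume : Measure ℝ).prod volume) :=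
        (integral_indicator hS).symm
    _ = ∫ p in polarCoord.target, p.1 • S.indicator h (polarCoord.symm p) := by
        rw [integral_comp_polarCoord_symm (S.indicator h), ← Measure.volume_eq_prod]
    _ = ∫ p in polarCoord.target,
          (Ici (Real.sqrt c)).indicator G p.1 * (fun _ : ℝ => (1 : ℝ)) p.2 :=
        setIntegral_congr_fun polarCoord.open_target.measurableSet hptw
    _ = (∫ r in Ioi (0:ℝ), (Ici (Real.sqrt c)).indicator G r)
          * ∫ _ in Ioo (-π) π, (1 : ℝ) := by
        rw [polarCoord_target, Measure.volume_eq_prod]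
        exact setIntegral_prod_mul (L := ℝ) ((Ici (Real.sqrt c)).indicator G) (fun _ => (1:ℝ)) (Ioi 0) (Ioo (-π) π)
    _ = Real.exp (-c / (2 * s)) := by
        have hinter : Ioi (0:ℝ) ∩ Ici (Real.sqrt c) = Ici (Real.sqrt c) :=
          Set.inter_eq_self_of_subset_right (fun x hx => lt_of_lt_of_le hsqrtpos hx)
        rw [setIntegral_indicator measurableSet_Ici, hinter, integral_Ici_eq_integral_Ioi, hG]
        rw [MeasureTheory.integral_const_mul, radial_int s hs (Real.sqrt c),
          Real.sq_sqrt hc.le, setIntegral_const, volume_real_Ioo_of_le (by linarith [Real.pi_pos] : -π ≤ π), smul_eq_mul, mul_one]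
        have hπ : (π:ℝ) ≠ 0 := Real.pi_ne_zero
        have hs' : s ≠ 0 := hs.ne'
        field_simp
        ring

end DetectionAux

open DetectionAux in

theorem expected_detection_probability_gaussian {Ω : Type*} [MeasurableSpace Ω]
    (P : Measure Ω) [IsProbabilityMeasure P]
    (ζ v : ℝ) (hζ : 0 < ζ) (hv : 0 < v)
    (Z₁ Z₂ : Ω → ℝ)
    (hmap₁ : Measure.map Z₁ P = gaussianReal 0 (Real.toNNReal (ζ + v / 2)))
    (hmap₂ : Measure.map Z₂ P = gaussianReal 0 (Real.toNNReal (ζ + v / 2)))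
    (hind : IndepFun Z₁ Z₂ P)
    (p_fa : ℝ) (hp : p_fa ∈ Set.Ioo (0 : ℝ) 1) :
    P {ω | -2 * Real.log p_fa ≤ 2 * (Z₁ ω ^ 2 + Z₂ ω ^ 2) / v}
      = ENNReal.ofReal (Real.exp (Real.log p_fa / (2 * ζ / v + 1))) := by

  obtain ⟨hp0, hp1⟩ := hp
  have hlog : Real.log p_fa < 0 := Real.log_neg hp0 hp1
  have hs : 0 < ζ + v / 2 := by positivity
  set c : ℝ := -v * Real.log p_fa with hcdef
  have hc : 0 < c := by nlinarith
  have hZ₁ : AEMeasurable Z₁ P := by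
    by_contra hA
    rw [Measure.map_of_not_aemeasurable hA] at hmap₁
    exact (IsProbabilityMeasure.ne_zero (gaussianReal 0 (Real.toNNReal (ζ + v / 2)))) hmap₁.symm
  have hZ₂ : AEMeasurable Z₂ P := by
    by_contra hA
    rw [Measure.map_of_not_aemeasurable hA] at hmap₂
    exact (IsProbabilityMeasure.ne_zero (gaussianReal 0 (Real.toNNReal (ζ + v / 2)))) hmap₂.symm
  have hpair : P.map (fun ω => (Z₁ ω, Z₂ ω))
      = (gaussianReal 0 (ζ + v / 2).toNNReal).prod (gaussianReal 0 (ζ + v / 2).toNNReal) := by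
    rw [(indepFun_iff_map_prod_eq_prod_map_map hZ₁ hZ₂).mp hind, hmap₁, hmap₂]
  have hset : {ω | -2 * Real.log p_fa ≤ 2 * (Z₁ ω ^ 2 + Z₂ ω ^ 2) / v}
      = (fun ω => (Z₁ ω, Z₂ ω)) ⁻¹' {p : ℝ × ℝ | c ≤ p.1 ^ 2 + p.2 ^ 2} := by
    ext ω
    simp only [Set.mem_setOf_eq, Set.mem_preimage, hcdef]
    rw [le_div_iff₀ hv]
    constructor <;> intro H <;> nlinarith
  have hSmeas : MeasurableSet {p : ℝ × ℝ | c ≤ p.1 ^ 2 + p.2 ^ 2} := by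
    apply measurableSet_le measurable_const
    fun_prop
  rw [hset, ← Measure.map_apply_of_aemeasurable (hZ₁.prodMk hZ₂) hSmeas, hpair,
    key (ζ + v / 2) c hs hc]
  congr 1
  rw [hcdef]
  have h1 : 2 * ζ / v + 1 = (2 * ζ + v) / v := by field_simp
  have h2 : (2 * ζ + v : ℝ) ≠ 0 := by positivity
  rw [h1]
  have hv' : v ≠ 0 := hv.ne'
  field_simp
end
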